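/- In ℤ[μ⃗][[t₁,t₂]], there is a unit p(t₁,t₂) (a power series with constant term 1) such that 1/x⟨t₂⟩ - 1/x⟨t₁⟩ = -(t₂-t₁)(t₂'-t₁)·p(t₁,t₂), where t₂' is the involution series evaluated at t₂. Moreover p(t₁,t₂) = 1 + μ₁t₁ + μ₂t₂² + (μ₂+μ₁²)t₁² + μ₁μ₂t₂³ + ..., and setting t₂ = 0 gives p(t₁,0) = (1/x⟨t₁⟩)/t₁². -/

import Mathlib

noncomputable section

/-- The coefficient ring `ℤ[μ₁,μ₂,μ₃,μ₄,μ₆]`. -/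
abbrev CoefRing : Type := MvPolynomial (Fin 5) ℤ

def μ1 : CoefRing := MvPolynomial.X 0
def μ2 : CoefRing := MvPolynomial.X 1
def μ3 : CoefRing := MvPolynomial.X 2
def μ4 : CoefRing := MvPolynomial.X 3
def μ6 : CoefRing := MvPolynomial.X 4

open PowerSeries in
/-- The functional equation `s = (1 + μ₂s + μ₄s² + μ₆s³)t² + (μ₁s + μ₃s²)t`
satisfied by `s = 1/x` in the arithmetic parameter `t = -x/y` of the curve
`y² + (μ₁x+μ₃)y = x³ + μ₂x² + μ₄x + μ₆`. -/
def SFunEq (s : PowerSeries CoefRing) : Prop :=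
  s = (1 + C (R := CoefRing) μ2 * s + C (R := CoefRing) μ4 * s ^ 2 + C (R := CoefRing) μ6 * s ^ 3) * X ^ 2
      + (C (R := CoefRing) μ1 * s + C (R := CoefRing) μ3 * s ^ 2) * X

/-- Embedding of power series into formal Laurent series. -/
abbrev toL : PowerSeries CoefRing →+* LaurentSeries CoefRing :=
  HahnSeries.ofPowerSeries ℤ CoefRing

/-- The Laurent series `t`. -/
def tL : LaurentSeries CoefRing := HahnSeries.single (1 : ℤ) (1 : CoefRing)

/-- Constant Laurent series. -/
abbrev CL : CoefRing →+* LaurentSeries CoefRing := HahnSeries.C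

/-- `IsXY s x y` says: `s` is the canonical solution of the functional equation,
`x = 1/s` (the expansion `x⟨t⟩` of the `x`-coordinate) and `y = -x/t`
(the expansion `y⟨t⟩` of the `y`-coordinate). -/
structure IsXY (s : PowerSeries CoefRing)
    (x y : LaurentSeries CoefRing) : Prop where
  s0 : PowerSeries.constantCoeff (R := CoefRing) s = 0
  seq : SFunEq s
  hx : x * toL s = 1
  hy : y * tL = -x

open PowerSeries

/-- The two-variable power series ring `ℤ[μ⃗][[t₁,t₂]] = (ℤ[μ⃗][[t₁]])[[t₂]]`:
the inner variable is `t₁`, the outer one is `t₂`. -/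
abbrev PS2 : Type := PowerSeries (PowerSeries CoefRing)

/-- `t₁` as an element of `ℤ[μ⃗][[t₁,t₂]]`. -/
def T1 : PS2 := PowerSeries.C (R := PowerSeries CoefRing) PowerSeries.X
/-- `t₂` as an element of `ℤ[μ⃗][[t₁,t₂]]`. -/
def T2 : PS2 := PowerSeries.X
/-- A series `f(t)` regarded as `f(t₁)`. -/
def inT1 (f : PowerSeries CoefRing) : PS2 := PowerSeries.C (R := PowerSeries CoefRing) f
/-- A series `f(t)` regarded as `f(t₂)`. -/
def inT2 (f : PowerSeries CoefRing) : PS2 := PowerSeries.map (PowerSeries.C (R := CoefRing)) f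
/-- The coefficient of `t₁^i t₂^j`. -/
def coeff2 (i j : ℕ) (f : PS2) : CoefRing :=
  PowerSeries.coeff (R := CoefRing) i (PowerSeries.coeff (R := PowerSeries CoefRing) j f)


section Aux

lemma toL_X : toL (PowerSeries.X : PowerSeries CoefRing) = tL := by
  rw [tL]; exact HahnSeries.ofPowerSeries_X

lemma ps_constantCoeff_map {R S : Type*} [CommRing R] [CommRing S] (f : R →+* S)
    (φ : PowerSeries R) :
    PowerSeries.constantCoeff (R := S) (PowerSeries.map f φ) = f (PowerSeries.constantCoeff (R := R) φ) := by
  rw [← PowerSeries.coeff_zero_eq_constantCoeff_apply, PowerSeries.coeff_map,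
    PowerSeries.coeff_zero_eq_constantCoeff_apply]

lemma ps_map_map {R S T : Type*} [CommRing R] [CommRing S] [CommRing T]
    (f : R →+* S) (g : S →+* T) (φ : PowerSeries R) :
    PowerSeries.map g (PowerSeries.map f φ) = PowerSeries.map (g.comp f) φ := by
  ext n
  simp [PowerSeries.coeff_map]

end Aux

set_option maxHeartbeats 1000000 in
/-- There is a unit `p(t₁,t₂) ∈ ℤ[μ⃗][[t₁,t₂]]` with constant term `1` such that
`1/x⟨t₂⟩ - 1/x⟨t₁⟩ = -(t₂-t₁)(t₂'-t₁)·p(t₁,t₂)` (note `1/x⟨t⟩ = s(t)`);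
moreover `p = 1 + μ₁t₁ + μ₂t₂² + (μ₂+μ₁²)t₁² + μ₁μ₂t₂³ + ⋯` and
`p(t₁,0) = (1/x⟨t₁⟩)/t₁²`. -/
theorem statement7 (s : PowerSeries CoefRing) (x y : LaurentSeries CoefRing)
    (h : IsXY s x y) (T' : PowerSeries CoefRing)
    (hT' : toL T' * (y + CL μ1 * x + CL μ3) = x) :
    ∃ p : PS2,
      inT2 s - inT1 s = -((T2 - T1) * (inT2 T' - T1)) * p ∧
      coeff2 0 0 p = 1 ∧
      coeff2 1 0 p = μ1 ∧
      coeff2 0 2 p = μ2 ∧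
      coeff2 2 0 p = μ2 + μ1 ^ 2 ∧
      coeff2 0 3 p = μ1 * μ2 ∧
      (PowerSeries.constantCoeff (R := PowerSeries CoefRing) p) * PowerSeries.X ^ 2 = s := by
  have hseq : s = (1 + C (R := CoefRing) μ2 * s + C (R := CoefRing) μ4 * s ^ 2 + C (R := CoefRing) μ6 * s ^ 3) * X ^ 2
      + (C (R := CoefRing) μ1 * s + C (R := CoefRing) μ3 * s ^ 2) * X := h.seq
  have hxL : x * toL s = 1 := h.hx
  have hyL : y * tL = -x := h.hy
  -- nonvanishing in the Laurent series ring
  have hx0 : x ≠ 0 := left_ne_zero_of_mul_eq_one hxL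
  have hy0 : y ≠ 0 := by
    intro hy
    rw [hy, zero_mul] at hyL
    exact hx0 (neg_eq_zero.mp hyL.symm)
  have hw0 : y + CL μ1 * x + CL μ3 ≠ 0 := by
    intro hww
    rw [hww, mul_zero] at hT'
    exact hx0 hT'.symm
  have hT'0 : toL T' ≠ 0 := by
    intro hh
    rw [hh, zero_mul] at hT'
    exact hx0 hT'.symm
  have hT'ne : T' ≠ 0 := by
    intro h0
    exact hT'0 (by rw [h0, map_zero])
  -- the functional equation in the Laurent series ring
  have hSL : toL s
      = (1 + CL μ2 * toL s + CL μ4 * toL s ^ 2 + CL μ6 * toL s ^ 3) * tL ^ 2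
        + (CL μ1 * toL s + CL μ3 * toL s ^ 2) * tL := by
    have h2 := congrArg toL hseq
    simpa only [map_add, map_mul, map_pow, map_one, HahnSeries.ofPowerSeries_C, toL_X] using h2
  -- the Weierstrass equation
  have h3 : y * (y + CL μ1 * x + CL μ3) * x ^ 2
      = (x ^ 3 + CL μ2 * x ^ 2 + CL μ4 * x + CL μ6) * x ^ 2 := by
    linear_combination (x ^ 3 * y ^ 2) * hSL
      + (-(x ^ 2 * y ^ 2)
          + x ^ 2 * (CL μ2 * x ^ 2 + CL μ4 * x * (x * toL s + 1)
              + CL μ6 * ((x * toL s) ^ 2 + x * toL s + 1))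
          - y * (CL μ1 * x ^ 3 + CL μ3 * x ^ 2 * (x * toL s + 1))) * hxL
      + (x ^ 3 * (1 + CL μ2 * toL s + CL μ4 * toL s ^ 2 + CL μ6 * toL s ^ 3) * (y * tL - x)
          + x ^ 3 * (CL μ1 * toL s + CL μ3 * toL s ^ 2) * y) * hyL
  have hWei : y * (y + CL μ1 * x + CL μ3) = x ^ 3 + CL μ2 * x ^ 2 + CL μ4 * x + CL μ6 :=
    mul_right_cancel₀ (pow_ne_zero 2 hx0) h3
  have hcan : x ^ 2 * y * (y + CL μ1 * x + CL μ3) ≠ 0 :=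
    mul_ne_zero (mul_ne_zero (pow_ne_zero 2 hx0) hy0) hw0
  -- Vieta identities in the Laurent series ring
  have V2L : (1 + CL μ2 * toL s + CL μ4 * toL s ^ 2 + CL μ6 * toL s ^ 3) * (tL * toL T')
      = -toL s := by
    apply mul_right_cancel₀ hcan
    linear_combination
      ((1 + CL μ2 * toL s + CL μ4 * toL s ^ 2 + CL μ6 * toL s ^ 3) * x ^ 2 * (y * tL)) * hT'
      + ((1 + CL μ2 * toL s + CL μ4 * toL s ^ 2 + CL μ6 * toL s ^ 3) * x ^ 3) * hyL
      + x * hWei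
      + (x * y * (y + CL μ1 * x + CL μ3)
          - x * (CL μ2 * x ^ 2 + CL μ4 * x * (x * toL s + 1)
              + CL μ6 * ((x * toL s) ^ 2 + x * toL s + 1))) * hxL
  have V1L : (1 + CL μ2 * toL s + CL μ4 * toL s ^ 2 + CL μ6 * toL s ^ 3) * (tL + toL T')
      = -(CL μ1 * toL s + CL μ3 * toL s ^ 2) := by
    apply mul_right_cancel₀ hcan
    linear_combination
      ((1 + CL μ2 * toL s + CL μ4 * toL s ^ 2 + CL μ6 * toL s ^ 3) * x ^ 2
          * (y + CL μ1 * x + CL μ3)) * hyL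
      + ((1 + CL μ2 * toL s + CL μ4 * toL s ^ 2 + CL μ6 * toL s ^ 3) * x ^ 2 * y) * hT'
      + ((CL μ1 * x * y * (y + CL μ1 * x + CL μ3)
            + CL μ3 * y * (y + CL μ1 * x + CL μ3) * (x * toL s + 1))
          - (CL μ1 * x + CL μ3) * (CL μ2 * x ^ 2 + CL μ4 * x * (x * toL s + 1)
              + CL μ6 * ((x * toL s) ^ 2 + x * toL s + 1))) * hxL
      + (CL μ1 * x + CL μ3) * hWei
  -- pull the Vieta identities back to power series
  have inj : Function.Injective (toL : PowerSeries CoefRing → LaurentSeries CoefRing) :=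
    HahnSeries.ofPowerSeries_injective
  have V1 : (1 + C (R := CoefRing) μ2 * s + C (R := CoefRing) μ4 * s ^ 2 + C (R := CoefRing) μ6 * s ^ 3) * (X + T')
      = -(C (R := CoefRing) μ1 * s + C (R := CoefRing) μ3 * s ^ 2) := by
    apply inj
    simp only [map_add, map_mul, map_pow, map_one, map_neg, HahnSeries.ofPowerSeries_C, toL_X]
    linear_combination V1L
  have V2 : (1 + C (R := CoefRing) μ2 * s + C (R := CoefRing) μ4 * s ^ 2 + C (R := CoefRing) μ6 * s ^ 3) * (X * T')
      = -s := by
    apply inj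
    simp only [map_add, map_mul, map_pow, map_one, map_neg, HahnSeries.ofPowerSeries_C, toL_X]
    linear_combination V2L
  -- coefficients of s
  have hs0 : (coeff (R := CoefRing) 0) s = 0 := by
    rw [coeff_zero_eq_constantCoeff]; exact h.s0
  have hseq2 : s = (1 + C (R := CoefRing) μ2 * s + C (R := CoefRing) μ4 * s ^ 2 + C (R := CoefRing) μ6 * s ^ 3) * X ^ 2
      + (C (R := CoefRing) μ1 * s + C (R := CoefRing) μ3 * s ^ 2) * X ^ 1 := by
    rw [pow_one]; exact hseq
  have hcoeff : ∀ d : ℕ, (coeff (R := CoefRing) d) s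
      = (if 2 ≤ d then (coeff (R := CoefRing) (d - 2))
            (1 + C (R := CoefRing) μ2 * s + C (R := CoefRing) μ4 * s ^ 2 + C (R := CoefRing) μ6 * s ^ 3) else 0)
        + (if 1 ≤ d then (coeff (R := CoefRing) (d - 1))
            (C (R := CoefRing) μ1 * s + C (R := CoefRing) μ3 * s ^ 2) else 0) := by
    intro d
    conv_lhs => rw [hseq2]
    rw [map_add, coeff_mul_X_pow', coeff_mul_X_pow']
  have hs1 : (coeff (R := CoefRing) 1) s = 0 := by
    rw [hcoeff 1]
    norm_num [coeff_zero_eq_constantCoeff, map_add, map_mul, map_pow, h.s0]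
  have hdvd : (X : PowerSeries CoefRing) ^ 2 ∣ s := by
    rw [X_pow_dvd_iff]
    intro m hm
    interval_cases m
    · exact hs0
    · exact hs1
  obtain ⟨b, hb⟩ := hdvd
  have hsq : ∀ d : ℕ, d < 4 → (coeff (R := CoefRing) d) (s ^ 2) = 0 := by
    intro d hd
    have h2 : s ^ 2 = X ^ 4 * b ^ 2 := by rw [hb]; ring
    rw [h2, coeff_X_pow_mul', if_neg (by omega)]
  have hcb : ∀ d : ℕ, d < 6 → (coeff (R := CoefRing) d) (s ^ 3) = 0 := by
    intro d hd
    have h2 : s ^ 3 = X ^ 6 * b ^ 3 := by rw [hb]; ring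
    rw [h2, coeff_X_pow_mul', if_neg (by omega)]
  have cG0 : (coeff (R := CoefRing) 0)
      (1 + C (R := CoefRing) μ2 * s + C (R := CoefRing) μ4 * s ^ 2 + C (R := CoefRing) μ6 * s ^ 3) = 1 := by
    simp [coeff_one, coeff_C_mul, hs0, hsq 0 (by norm_num), hcb 0 (by norm_num), h.s0]
  have cG1 : (coeff (R := CoefRing) 1)
      (1 + C (R := CoefRing) μ2 * s + C (R := CoefRing) μ4 * s ^ 2 + C (R := CoefRing) μ6 * s ^ 3) = 0 := by
    simp [coeff_one, coeff_C_mul, hs1, hsq 1 (by norm_num), hcb 1 (by norm_num), h.s0]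
  have hs2 : (coeff (R := CoefRing) 2) s = 1 := by
    rw [hcoeff 2]
    norm_num [coeff_C_mul, hs1, hsq 1 (by norm_num), cG0]
  have hs3 : (coeff (R := CoefRing) 3) s = μ1 := by
    rw [hcoeff 3]
    norm_num [coeff_C_mul, hs2, hsq 2 (by norm_num), cG1]
  have cG2 : (coeff (R := CoefRing) 2)
      (1 + C (R := CoefRing) μ2 * s + C (R := CoefRing) μ4 * s ^ 2 + C (R := CoefRing) μ6 * s ^ 3) = μ2 := by
    simp [coeff_one, coeff_C_mul, hs2, hsq 2 (by norm_num), hcb 2 (by norm_num), h.s0]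
  have cG3 : (coeff (R := CoefRing) 3)
      (1 + C (R := CoefRing) μ2 * s + C (R := CoefRing) μ4 * s ^ 2 + C (R := CoefRing) μ6 * s ^ 3) = μ2 * μ1 := by
    simp [coeff_one, coeff_C_mul, hs3, hsq 3 (by norm_num), hcb 3 (by norm_num), h.s0]
  have hs4 : (coeff (R := CoefRing) 4) s = μ2 + μ1 ^ 2 := by
    rw [hcoeff 4]
    norm_num [coeff_C_mul, hs3, hsq 3 (by norm_num), cG2]
    ring
  -- constant coefficient of T'
  have hT'c : PowerSeries.constantCoeff (R := CoefRing) T' = 0 := by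
    have h1 := congrArg (coeff (R := CoefRing) 1) V2
    rw [show (1 + C (R := CoefRing) μ2 * s + C (R := CoefRing) μ4 * s ^ 2 + C (R := CoefRing) μ6 * s ^ 3) * (X * T')
        = ((1 + C (R := CoefRing) μ2 * s + C (R := CoefRing) μ4 * s ^ 2 + C (R := CoefRing) μ6 * s ^ 3) * T') * X ^ 1
        from by ring, coeff_mul_X_pow', if_pos (by norm_num), map_neg, hs1, neg_zero] at h1
    rw [coeff_zero_eq_constantCoeff_apply, map_mul] at h1
    have hG0 : PowerSeries.constantCoeff (R := CoefRing)
        (1 + C (R := CoefRing) μ2 * s + C (R := CoefRing) μ4 * s ^ 2 + C (R := CoefRing) μ6 * s ^ 3) = 1 := by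
      simp [h.s0]
    rw [hG0, one_mul] at h1
    exact h1
  -- move to the two-variable power series ring
  have E1 : inT1 s
      = (1 + inT1 (C (R := CoefRing) μ2) * inT1 s + inT1 (C (R := CoefRing) μ4) * inT1 s ^ 2
            + inT1 (C (R := CoefRing) μ6) * inT1 s ^ 3) * T1 ^ 2
        + (inT1 (C (R := CoefRing) μ1) * inT1 s + inT1 (C (R := CoefRing) μ3) * inT1 s ^ 2) * T1 := by
    have h2 := congrArg (PowerSeries.C (R := PowerSeries CoefRing)) hseq
    simpa only [map_add, map_mul, map_pow, map_one, inT1, T1] using h2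
  have V12 : (1 + inT1 (C (R := CoefRing) μ2) * inT2 s + inT1 (C (R := CoefRing) μ4) * inT2 s ^ 2
        + inT1 (C (R := CoefRing) μ6) * inT2 s ^ 3) * (T2 + inT2 T')
      = -(inT1 (C (R := CoefRing) μ1) * inT2 s + inT1 (C (R := CoefRing) μ3) * inT2 s ^ 2) := by
    have h2 := congrArg (PowerSeries.map (PowerSeries.C (R := CoefRing))) V1
    simpa only [map_add, map_mul, map_pow, map_one, map_neg, PowerSeries.map_C,
      PowerSeries.map_X, inT1, inT2, T2] using h2
  have V22 : (1 + inT1 (C (R := CoefRing) μ2) * inT2 s + inT1 (C (R := CoefRing) μ4) * inT2 s ^ 2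
        + inT1 (C (R := CoefRing) μ6) * inT2 s ^ 3) * (T2 * inT2 T')
      = -inT2 s := by
    have h2 := congrArg (PowerSeries.map (PowerSeries.C (R := CoefRing))) V2
    simpa only [map_add, map_mul, map_pow, map_one, map_neg, PowerSeries.map_C,
      PowerSeries.map_X, inT1, inT2, T2] using h2
  -- the unit
  set D : PS2 :=
      (inT1 (C (R := CoefRing) μ2) + inT1 (C (R := CoefRing) μ4) * (inT1 s + inT2 s)
          + inT1 (C (R := CoefRing) μ6) * (inT1 s ^ 2 + inT1 s * inT2 s + inT2 s ^ 2)) * T1 ^ 2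
        + (inT1 (C (R := CoefRing) μ1) + inT1 (C (R := CoefRing) μ3) * (inT1 s + inT2 s)) * T1 with hD
  have hu : IsUnit ((1 : PS2) - D) := by
    rw [PowerSeries.isUnit_iff_constantCoeff]
    rw [PowerSeries.isUnit_iff_constantCoeff]
    rw [hD]
    simp only [map_sub, map_add, map_mul, map_pow, map_one]
    simp only [inT1, T1, T2, inT2, PowerSeries.constantCoeff_C, ps_constantCoeff_map,
      PowerSeries.constantCoeff_X]
    simp
  set p : PS2 := (1 + inT1 (C (R := CoefRing) μ2) * inT2 s + inT1 (C (R := CoefRing) μ4) * inT2 s ^ 2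
      + inT1 (C (R := CoefRing) μ6) * inT2 s ^ 3) * ↑hu.unit⁻¹ with hp
  have key : (inT2 s - inT1 s) * (1 - D)
      = -((T2 - T1) * (inT2 T' - T1))
          * (1 + inT1 (C (R := CoefRing) μ2) * inT2 s + inT1 (C (R := CoefRing) μ4) * inT2 s ^ 2
              + inT1 (C (R := CoefRing) μ6) * inT2 s ^ 3) := by
    rw [hD]
    linear_combination -E1 + V22 - T1 * V12
  have hup : ((1 : PS2) - D) * ↑hu.unit⁻¹ = 1 := hu.mul_val_inv
  have main : inT2 s - inT1 s = -((T2 - T1) * (inT2 T' - T1)) * p := by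
    calc inT2 s - inT1 s = (inT2 s - inT1 s) * (((1 : PS2) - D) * ↑hu.unit⁻¹) := by
          rw [hup, mul_one]
      _ = ((inT2 s - inT1 s) * (1 - D)) * ↑hu.unit⁻¹ := by ring
      _ = (-((T2 - T1) * (inT2 T' - T1))
            * (1 + inT1 (C (R := CoefRing) μ2) * inT2 s + inT1 (C (R := CoefRing) μ4) * inT2 s ^ 2
                + inT1 (C (R := CoefRing) μ6) * inT2 s ^ 3)) * ↑hu.unit⁻¹ := by rw [key]
      _ = -((T2 - T1) * (inT2 T' - T1)) * p := by rw [hp]; ring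
  -- evaluation at t₂ = 0
  have e0 : (PowerSeries.constantCoeff (R := PowerSeries CoefRing)) p * PowerSeries.X ^ 2 = s := by
    have h4 := congrArg (PowerSeries.constantCoeff (R := PowerSeries CoefRing)) main
    simp only [map_sub, map_neg, map_mul, inT1, T1, T2, inT2,
      PowerSeries.constantCoeff_C, ps_constantCoeff_map, PowerSeries.constantCoeff_X,
      h.s0, hT'c, map_zero] at h4
    linear_combination h4
  -- evaluation at t₁ = 0
  have e1 : PowerSeries.map (PowerSeries.constantCoeff (R := CoefRing)) p
      = 1 + C (R := CoefRing) μ2 * s + C (R := CoefRing) μ4 * s ^ 2 + C (R := CoefRing) μ6 * s ^ 3 := by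
    have h5 := congrArg (PowerSeries.map (PowerSeries.constantCoeff (R := CoefRing))) main
    rw [show inT2 s - inT1 s = PowerSeries.map (PowerSeries.C (R := CoefRing)) s
        - PowerSeries.C (R := PowerSeries CoefRing) s from rfl] at h5
    simp only [map_sub, map_neg, map_mul, PowerSeries.map_C, PowerSeries.map_X,
      ps_map_map, h.s0, map_zero, PowerSeries.constantCoeff_X, T1, T2, inT2] at h5
    have hid : ∀ φ : PowerSeries CoefRing, PowerSeries.map
        ((PowerSeries.constantCoeff (R := CoefRing)).comp (PowerSeries.C (R := CoefRing))) φ = φ := by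
      intro φ
      have h6 : (PowerSeries.constantCoeff (R := CoefRing)).comp (PowerSeries.C (R := CoefRing))
          = RingHom.id CoefRing := RingHom.ext fun a => PowerSeries.constantCoeff_C a
      rw [h6]
      exact congrFun PowerSeries.map_id φ
    simp only [hid] at h5
    have h6 : (X * T') * PowerSeries.map (PowerSeries.constantCoeff (R := CoefRing)) p
        = (X * T') * (1 + C (R := CoefRing) μ2 * s + C (R := CoefRing) μ4 * s ^ 2
            + C (R := CoefRing) μ6 * s ^ 3) := by
      linear_combination h5 - V2
    exact mul_left_cancel₀ (mul_ne_zero PowerSeries.X_ne_zero hT'ne) h6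
  have cj : ∀ j : ℕ, coeff2 0 j p = (coeff (R := CoefRing) j)
      (1 + C (R := CoefRing) μ2 * s + C (R := CoefRing) μ4 * s ^ 2 + C (R := CoefRing) μ6 * s ^ 3) := by
    intro j
    rw [← e1, PowerSeries.coeff_map, coeff2, coeff_zero_eq_constantCoeff_apply]
  have ci : ∀ i : ℕ, coeff2 i 0 p = (coeff (R := CoefRing) (i + 2)) s := by
    intro i
    rw [coeff2, ← e0, coeff_mul_X_pow, coeff_zero_eq_constantCoeff_apply]
  refine ⟨p, main, ?_, ?_, ?_, ?_, ?_, e0⟩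
  · rw [cj 0, cG0]
  · rw [ci 1]; exact hs3
  · rw [cj 2, cG2]
  · rw [ci 2]; exact hs4
  · rw [cj 3, cG3, mul_comm]
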